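/- Let S and A be finite sets, let p : S × A × S → [0,1] be a transition function with Σ_{s'} p(s'∣s,a) = 1 for all (s,a), and let π : S × A → [0,1] be a stochastic policy with Σ_a π(a∣s) = 1 for all s. Fix a state s ∈ S, let α > 0 and δ > 0, and set η = α/(|A|·|S|). Suppose that for every action a ∈ A with π(a∣s) ≥ η, the empirical estimate p̂(s'∣s,a) is formed as the fraction of m_a independent samples from p(·∣s,a) equal to s', where m_a ≥ (|S|²/α²)·log(2·|A|·|S|/δ). Then with probability at least 1 − δ, the total variation distance between the induced next-state distributions 𝒯(s'∣s) = Σ_a π(a∣s)·p(s'∣s,a) and 𝒯̂(s'∣s) = Σ_a π(a∣s)·p̂(s'∣s,a) is at most α, where for actions with π(a∣s) < η the values p̂(·∣s,a) may be an arbitrary probability distribution on S. -/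

import Mathlib

open MeasureTheory ProbabilityTheory Classical

/-- Total variation distance between two distributions on a finite set. -/
noncomputable def tvDist {S : Type*} [Fintype S] (p q : S → ℝ) : ℝ :=
  (1 / 2) * ∑ s, |p s - q s|

lemma Dpos {p : ℝ} (hp0 : 0 ≤ p) (hp1 : p ≤ 1) (t : ℝ) : 0 < 1 - p + p * Real.exp t := by
  rcases eq_or_lt_of_le hp1 with h | h
  · subst h; simpa using Real.exp_pos t
  · have : 0 ≤ p * Real.exp t := mul_nonneg hp0 (Real.exp_pos t).le
    linarith

lemma phi_deriv {p : ℝ} (hp0 : 0 ≤ p) (hp1 : p ≤ 1) (t : ℝ) :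
    HasDerivAt (fun t => t^2/8 + t*p - Real.log (1 - p + p * Real.exp t))
      (t/4 + p - p * Real.exp t / (1 - p + p * Real.exp t)) t := by
  have hD : HasDerivAt (fun t => 1 - p + p * Real.exp t) (p * Real.exp t) t := by
    simpa using ((Real.hasDerivAt_exp t).const_mul p).const_add (1 - p)
  have h1 : HasDerivAt (fun t : ℝ => t^2/8 + t*p) (t/4 + p) t := by
    have : HasDerivAt (fun t : ℝ => t^2/8 + t*p) (↑(2:ℕ) * t ^ (2 - 1) / 8 + 1 * p) t :=
      ((hasDerivAt_pow 2 t).div_const 8).add ((hasDerivAt_id t).mul_const p)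
    convert this using 1; ring
  exact h1.sub (hD.log (Dpos hp0 hp1 t).ne')

lemma g_deriv {p : ℝ} (hp0 : 0 ≤ p) (hp1 : p ≤ 1) (t : ℝ) :
    HasDerivAt (fun t => t/4 + p - p * Real.exp t / (1 - p + p * Real.exp t))
      (1/4 - (p * Real.exp t * (1 - p + p * Real.exp t) - p * Real.exp t * (p * Real.exp t))
          / (1 - p + p * Real.exp t)^2) t := by
  have hD : HasDerivAt (fun t => 1 - p + p * Real.exp t) (p * Real.exp t) t := by
    simpa using ((Real.hasDerivAt_exp t).const_mul p).const_add (1 - p)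
  have hN : HasDerivAt (fun t => p * Real.exp t) (p * Real.exp t) t :=
    (Real.hasDerivAt_exp t).const_mul p
  have h1 : HasDerivAt (fun t : ℝ => t/4 + p) (1/4) t := by
    simpa using ((hasDerivAt_id t).div_const 4).add_const p
  exact h1.sub (hN.div hD (Dpos hp0 hp1 t).ne')

lemma g_deriv_nonneg {p : ℝ} (hp0 : 0 ≤ p) (hp1 : p ≤ 1) (t : ℝ) :
    0 ≤ 1/4 - (p * Real.exp t * (1 - p + p * Real.exp t) - p * Real.exp t * (p * Real.exp t))
          / (1 - p + p * Real.exp t)^2 := by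
  set a := p * Real.exp t with ha
  set D := 1 - p + p * Real.exp t with hDdef
  have hDpos : 0 < D := Dpos hp0 hp1 t
  have h : (a * D - a * a) / D^2 ≤ 1/4 := by
    rw [div_le_iff₀ (by positivity)]
    nlinarith [sq_nonneg (D - 2*a)]
  linarith

lemma g_mono {p : ℝ} (hp0 : 0 ≤ p) (hp1 : p ≤ 1) :
    Monotone (fun t => t/4 + p - p * Real.exp t / (1 - p + p * Real.exp t)) := by
  apply monotone_of_deriv_nonneg
  · exact fun t => (g_deriv hp0 hp1 t).differentiableAt
  · intro t
    rw [(g_deriv hp0 hp1 t).deriv]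
    exact g_deriv_nonneg hp0 hp1 t

lemma g_zero {p : ℝ} (hp0 : 0 ≤ p) (hp1 : p ≤ 1) :
    (fun t => t/4 + p - p * Real.exp t / (1 - p + p * Real.exp t)) 0 = 0 := by
  simp [Real.exp_zero]

lemma phi_nonneg {p : ℝ} (hp0 : 0 ≤ p) (hp1 : p ≤ 1) (t : ℝ) :
    0 ≤ t^2/8 + t*p - Real.log (1 - p + p * Real.exp t) := by
  set φ := fun t => t^2/8 + t*p - Real.log (1 - p + p * Real.exp t) with hφ
  set g := fun t => t/4 + p - p * Real.exp t / (1 - p + p * Real.exp t) with hg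
  have hder : ∀ x, HasDerivAt φ (g x) x := fun x => phi_deriv hp0 hp1 x
  have hcont : Continuous φ := by
    have : Differentiable ℝ φ := fun x => (hder x).differentiableAt
    exact this.continuous
  have hgm : Monotone g := g_mono hp0 hp1
  have hg0 : g 0 = 0 := g_zero hp0 hp1
  have hφ0 : φ 0 = 0 := by simp [hφ, Real.exp_zero]
  rcases le_total 0 t with ht | ht
  · have hmono : MonotoneOn φ (Set.Ici 0) := by
      apply monotoneOn_of_deriv_nonneg (convex_Ici 0) hcont.continuousOn
        (fun x _ => (hder x).differentiableAt.differentiableWithinAt)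
      intro x hx
      rw [(hder x).deriv]
      rw [interior_Ici] at hx
      calc (0:ℝ) = g 0 := hg0.symm
        _ ≤ g x := hgm hx.le
    have := hmono (Set.self_mem_Ici) (Set.mem_Ici.2 ht) ht
    rw [hφ0] at this; exact this
  · have hmono : AntitoneOn φ (Set.Iic 0) := by
      apply antitoneOn_of_deriv_nonpos (convex_Iic 0) hcont.continuousOn
        (fun x _ => (hder x).differentiableAt.differentiableWithinAt)
      intro x hx
      rw [(hder x).deriv]
      rw [interior_Iic] at hx
      calc g x ≤ g 0 := hgm hx.le
        _ = 0 := hg0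
    have := hmono (Set.mem_Iic.2 ht) (Set.self_mem_Iic) ht
    rw [hφ0] at this; exact this

/-- Hoeffding's lemma for Bernoulli: mgf of centered indicator. -/
lemma bern_mgf_le {p : ℝ} (hp0 : 0 ≤ p) (hp1 : p ≤ 1) (t : ℝ) :
    Real.exp (t * (1-p)) * p + Real.exp (t * (0-p)) * (1-p) ≤ Real.exp (t^2/8) := by
  have hD : 0 < 1 - p + p * Real.exp t := Dpos hp0 hp1 t
  have h := phi_nonneg hp0 hp1 t
  have hlog : Real.log (1 - p + p * Real.exp t) ≤ t^2/8 + t*p := by linarith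
  have : 1 - p + p * Real.exp t ≤ Real.exp (t^2/8 + t*p) := by
    calc 1 - p + p * Real.exp t = Real.exp (Real.log (1 - p + p * Real.exp t)) :=
          (Real.exp_log hD).symm
      _ ≤ Real.exp (t^2/8 + t*p) := Real.exp_le_exp.2 hlog
  have key : Real.exp (-(t*p)) * (1 - p + p * Real.exp t) ≤ Real.exp (t^2/8) := by
    calc Real.exp (-(t*p)) * (1 - p + p * Real.exp t)
        ≤ Real.exp (-(t*p)) * Real.exp (t^2/8 + t*p) := by
          apply mul_le_mul_of_nonneg_left this (Real.exp_pos _).le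
      _ = Real.exp (t^2/8) := by rw [← Real.exp_add]; ring_nf
  calc Real.exp (t * (1-p)) * p + Real.exp (t * (0-p)) * (1-p)
      = Real.exp (-(t*p)) * (1 - p + p * Real.exp t) := by
        rw [show t*(1-p) = t + -(t*p) by ring, show t*(0-p) = -(t*p) by ring, Real.exp_add]
        ring
    _ ≤ Real.exp (t^2/8) := key

/-- Chernoff bound for a sum of independent centered variables whose mgf is
subgaussian with parameter 1/8 (e.g. centered Bernoulli), upper tail. -/
lemma chernoff_upper {Ω : Type*} [MeasurableSpace Ω] (P : Measure Ω) [IsProbabilityMeasure P]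
    {n : ℕ} (W : Fin n → Ω → ℝ)
    (hindep : iIndepFun W P)
    (hmeas : ∀ i, Measurable (W i))
    (hbdd : ∀ i ω, |W i ω| ≤ 1)
    (hmgf : ∀ i t, mgf (W i) P t ≤ Real.exp (t^2/8))
    {ε : ℝ} (hε : 0 < ε) :
    P {ω | (n:ℝ)*ε ≤ ∑ i, W i ω} ≤ ENNReal.ofReal (Real.exp (-2*n*ε^2)) := by
  set t := 4*ε with ht
  have htpos : (0:ℝ) ≤ t := by positivity
  have hint : ∀ (u : ℝ) i, Integrable (fun ω => Real.exp (u * W i ω)) P := by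
    intro u i
    apply Integrable.mono' (integrable_const (Real.exp |u|))
    · exact (((hmeas i).const_mul u).exp).aestronglyMeasurable
    · filter_upwards with ω
      rw [Real.norm_eq_abs, abs_of_pos (Real.exp_pos _)]
      apply Real.exp_le_exp.2
      calc u * W i ω ≤ |u * W i ω| := le_abs_self _
        _ = |u| * |W i ω| := abs_mul _ _
        _ ≤ |u| * 1 := by gcongr; exact hbdd i ω
        _ = |u| := mul_one _
  have hintsum : Integrable (fun ω => Real.exp (t * (∑ i, W i) ω)) P :=
    hindep.integrable_exp_mul_sum hmeas (fun i _ => hint t i)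
  have hch := measure_ge_le_exp_mul_mgf (μ := P) (X := ∑ i, W i) ((n:ℝ)*ε) htpos hintsum
  have hmgfsum : mgf (∑ i, W i) P t ≤ Real.exp (n * (t^2/8)) := by
    rw [hindep.mgf_sum hmeas]
    calc ∏ i, mgf (W i) P t ≤ ∏ (_ : Fin n), Real.exp (t^2/8) := by
          apply Finset.prod_le_prod (fun i _ => mgf_nonneg) (fun i _ => hmgf i t)
      _ = Real.exp (n * (t^2/8)) := by
          rw [Finset.prod_const, ← Real.exp_nat_mul]; simp
  have hset : {ω | (n:ℝ)*ε ≤ ∑ i, W i ω} = {ω | (n:ℝ)*ε ≤ (∑ i, W i) ω} := by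
    ext ω; simp
  rw [hset]
  rw [ENNReal.le_ofReal_iff_toReal_le (measure_ne_top _ _) (Real.exp_pos _).le]
  calc (P {ω | (n:ℝ)*ε ≤ (∑ i, W i) ω}).toReal
      ≤ Real.exp (-t * ((n:ℝ)*ε)) * mgf (∑ i, W i) P t := hch
    _ ≤ Real.exp (-t * ((n:ℝ)*ε)) * Real.exp (n * (t^2/8)) := by
        apply mul_le_mul_of_nonneg_left hmgfsum (Real.exp_pos _).le
    _ = Real.exp (-2*n*ε^2) := by rw [← Real.exp_add]; congr 1; rw [ht]; ring

lemma chernoff_lower {Ω : Type*} [MeasurableSpace Ω] (P : Measure Ω) [IsProbabilityMeasure P]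
    {n : ℕ} (W : Fin n → Ω → ℝ)
    (hindep : iIndepFun W P)
    (hmeas : ∀ i, Measurable (W i))
    (hbdd : ∀ i ω, |W i ω| ≤ 1)
    (hmgf : ∀ i t, mgf (W i) P t ≤ Real.exp (t^2/8))
    {ε : ℝ} (hε : 0 < ε) :
    P {ω | ∑ i, W i ω ≤ -((n:ℝ)*ε)} ≤ ENNReal.ofReal (Real.exp (-2*n*ε^2)) := by
  set t := -(4*ε) with ht
  have htneg : t ≤ 0 := by simp [ht]; positivity
  have hint : ∀ (u : ℝ) i, Integrable (fun ω => Real.exp (u * W i ω)) P := by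
    intro u i
    apply Integrable.mono' (integrable_const (Real.exp |u|))
    · exact (((hmeas i).const_mul u).exp).aestronglyMeasurable
    · filter_upwards with ω
      rw [Real.norm_eq_abs, abs_of_pos (Real.exp_pos _)]
      apply Real.exp_le_exp.2
      calc u * W i ω ≤ |u * W i ω| := le_abs_self _
        _ = |u| * |W i ω| := abs_mul _ _
        _ ≤ |u| * 1 := by gcongr; exact hbdd i ω
        _ = |u| := mul_one _
  have hintsum : Integrable (fun ω => Real.exp (t * (∑ i, W i) ω)) P :=
    hindep.integrable_exp_mul_sum hmeas (fun i _ => hint t i)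
  have hch := measure_le_le_exp_mul_mgf (μ := P) (X := ∑ i, W i) (-((n:ℝ)*ε)) htneg hintsum
  have hmgfsum : mgf (∑ i, W i) P t ≤ Real.exp (n * (t^2/8)) := by
    rw [hindep.mgf_sum hmeas]
    calc ∏ i, mgf (W i) P t ≤ ∏ (_ : Fin n), Real.exp (t^2/8) := by
          apply Finset.prod_le_prod (fun i _ => mgf_nonneg) (fun i _ => hmgf i t)
      _ = Real.exp (n * (t^2/8)) := by
          rw [Finset.prod_const, ← Real.exp_nat_mul]; simp
  have hset : {ω | ∑ i, W i ω ≤ -((n:ℝ)*ε)} = {ω | (∑ i, W i) ω ≤ -((n:ℝ)*ε)} := by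
    ext ω; simp
  rw [hset]
  rw [ENNReal.le_ofReal_iff_toReal_le (measure_ne_top _ _) (Real.exp_pos _).le]
  calc (P {ω | (∑ i, W i) ω ≤ -((n:ℝ)*ε)}).toReal
      ≤ Real.exp (-t * -((n:ℝ)*ε)) * mgf (∑ i, W i) P t := hch
    _ ≤ Real.exp (-t * -((n:ℝ)*ε)) * Real.exp (n * (t^2/8)) := by
        apply mul_le_mul_of_nonneg_left hmgfsum (Real.exp_pos _).le
    _ = Real.exp (-2*n*ε^2) := by rw [← Real.exp_add]; congr 1; rw [ht]; ring

lemma bern_mgf_eq {Ω : Type*} [MeasurableSpace Ω] (P : Measure Ω) [IsProbabilityMeasure P]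
    {B : Set Ω} (hB : MeasurableSet B) {p : ℝ} (hp0 : 0 ≤ p) (hp1 : p ≤ 1)
    (hPB : P B = ENNReal.ofReal p) (t : ℝ) :
    mgf (fun ω => B.indicator (fun _ => (1:ℝ)) ω - p) P t
      = Real.exp (t*(1-p)) * p + Real.exp (t*(0-p)) * (1-p) := by
  have hPBc : (P Bᶜ).toReal = 1 - p := by
    rw [prob_compl_eq_one_sub hB, hPB,
      ENNReal.toReal_sub_of_le (by simpa using ENNReal.ofReal_le_one.2 hp1) ENNReal.one_ne_top]
    simp [ENNReal.toReal_ofReal hp0]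
  have hPBr : (P B).toReal = p := by rw [hPB, ENNReal.toReal_ofReal hp0]
  have hfun : (fun ω => Real.exp (t * (B.indicator (fun _ => (1:ℝ)) ω - p)))
      = fun ω => B.indicator (fun _ => Real.exp (t*(1-p))) ω
          + Bᶜ.indicator (fun _ => Real.exp (t*(0-p))) ω := by
    funext ω
    by_cases h : ω ∈ B
    · simp [Set.indicator_of_mem h, Set.indicator_of_notMem (by simpa using h : ω ∉ Bᶜ),
        mul_sub, mul_one]
    · simp [Set.indicator_of_notMem h, Set.indicator_of_mem (Set.mem_compl h), mul_sub]
  rw [mgf, hfun, integral_add ((integrable_const _).indicator hB)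
    ((integrable_const _).indicator hB.compl), integral_indicator_const _ hB,
    integral_indicator_const _ hB.compl, measureReal_def, measureReal_def, hPBr, hPBc]
  simp [smul_eq_mul]
  ring

/-- Per-pair frequency deviation bound. -/
lemma freq_dev_bound {Ω S : Type*} [MeasurableSpace Ω] [MeasurableSpace S]
    [MeasurableSingletonClass S]
    (P : Measure Ω) [IsProbabilityMeasure P] {n : ℕ} (Y : Fin n → Ω → S)
    (hmeas : ∀ i, Measurable (Y i))
    (hindep : iIndepFun Y P)
    (s' : S) {p : ℝ} (hp0 : 0 ≤ p) (hp1 : p ≤ 1)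
    (hlaw : ∀ i, P {ω | Y i ω = s'} = ENNReal.ofReal p)
    {ε : ℝ} (hε : 0 < ε) (hn : 0 < n) :
    P {ω | ε < |((Finset.univ.filter fun i => Y i ω = s').card : ℝ) / (n : ℝ) - p|}
      ≤ ENNReal.ofReal (2 * Real.exp (-2*n*ε^2)) := by
  classical
  set W : Fin n → Ω → ℝ := fun i ω => ({s'} : Set S).indicator (fun _ => (1:ℝ)) (Y i ω) - p
    with hW
  have hWmeas : ∀ i, Measurable (W i) := by
    intro i
    exact ((measurable_const.indicator (measurableSet_singleton s')).comp (hmeas i)).sub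
      measurable_const
  have hWindep : iIndepFun W P := by
    have := hindep.comp
      (fun _ => fun x => ({s'} : Set S).indicator (fun _ => (1:ℝ)) x - p)
      (fun _ => (measurable_const.indicator (measurableSet_singleton s')).sub measurable_const)
    exact this
  have hWbdd : ∀ i ω, |W i ω| ≤ 1 := by
    intro i ω
    rw [hW]
    by_cases h : Y i ω ∈ ({s'} : Set S)
    · simp only [Set.indicator_of_mem h]
      rw [abs_le]; constructor <;> linarith
    · simp only [Set.indicator_of_notMem h]
      rw [abs_le]; constructor <;> simp <;> linarith
  have hWmgf : ∀ i t, mgf (W i) P t ≤ Real.exp (t^2/8) := by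
    intro i t
    have hBset : (fun ω => (Y i ⁻¹' {s'}).indicator (fun _ => (1:ℝ)) ω - p) = W i := by
      funext ω
      simp only [hW, Set.indicator_apply, Set.mem_preimage, Set.mem_singleton_iff]
    have hBmeas : MeasurableSet (Y i ⁻¹' {s'}) := (hmeas i) (measurableSet_singleton s')
    have hPB : P (Y i ⁻¹' {s'}) = ENNReal.ofReal p := by
      exact hlaw i
    rw [← hBset, bern_mgf_eq P hBmeas hp0 hp1 hPB t]
    exact bern_mgf_le hp0 hp1 t
  -- count identity
  have hcount : ∀ ω, ((Finset.univ.filter fun i => Y i ω = s').card : ℝ)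
      = (∑ i, W i ω) + n * p := by
    intro ω
    rw [Finset.card_filter]
    push_cast
    rw [hW]
    simp only []
    rw [Finset.sum_sub_distrib]
    simp only [Finset.sum_const, Finset.card_univ, Fintype.card_fin, nsmul_eq_mul]
    have : ∀ i, (if Y i ω = s' then (1:ℝ) else 0)
        = ({s'} : Set S).indicator (fun _ => (1:ℝ)) (Y i ω) := by
      intro i
      by_cases h : Y i ω = s' <;> simp [h, Set.indicator_of_mem, Set.indicator_of_notMem]
    simp_rw [this]
    ring
  have hsub : {ω | ε < |((Finset.univ.filter fun i => Y i ω = s').card : ℝ) / (n : ℝ) - p|}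
      ⊆ {ω | (n:ℝ)*ε ≤ ∑ i, W i ω} ∪ {ω | ∑ i, W i ω ≤ -((n:ℝ)*ε)} := by
    intro ω hω
    simp only [Set.mem_setOf_eq] at hω
    have hnpos : (0:ℝ) < n := Nat.cast_pos.2 hn
    rw [hcount ω] at hω
    have h1 : ((∑ i, W i ω) + n * p) / n - p = (∑ i, W i ω) / n := by field_simp; ring
    rw [h1, abs_div, abs_of_pos hnpos] at hω
    have h2 : (n:ℝ) * ε < |∑ i, W i ω| := by
      rw [lt_div_iff₀ hnpos] at hω; linarith [hω]
    rcases le_or_gt 0 (∑ i, W i ω) with h | h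
    · left
      simp only [Set.mem_setOf_eq]
      rw [abs_of_nonneg h] at h2; linarith
    · right
      simp only [Set.mem_setOf_eq]
      rw [abs_of_neg h] at h2; linarith
  calc P {ω | ε < |((Finset.univ.filter fun i => Y i ω = s').card : ℝ) / (n : ℝ) - p|}
      ≤ P ({ω | (n:ℝ)*ε ≤ ∑ i, W i ω} ∪ {ω | ∑ i, W i ω ≤ -((n:ℝ)*ε)}) := measure_mono hsub
    _ ≤ P {ω | (n:ℝ)*ε ≤ ∑ i, W i ω} + P {ω | ∑ i, W i ω ≤ -((n:ℝ)*ε)} := measure_union_le _ _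
    _ ≤ ENNReal.ofReal (Real.exp (-2*n*ε^2)) + ENNReal.ofReal (Real.exp (-2*n*ε^2)) := by
        gcongr
        · exact chernoff_upper P W hWindep hWmeas hWbdd hWmgf hε
        · exact chernoff_lower P W hWindep hWmeas hWbdd hWmgf hε
    _ = ENNReal.ofReal (2 * Real.exp (-2*n*ε^2)) := by
        rw [← ENNReal.ofReal_add (Real.exp_pos _).le (Real.exp_pos _).le]; ring_nf
set_option maxHeartbeats 2000000 in
theorem ambs_tabular_tv_bound {S A : Type*} [Fintype S] [Fintype A]
    [MeasurableSpace S] [MeasurableSingletonClass S]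
    (p : A → S → ℝ) (hp0 : ∀ a s', 0 ≤ p a s') (hp1 : ∀ a, ∑ s', p a s' = 1)
    (π : A → ℝ) (hπ0 : ∀ a, 0 ≤ π a) (hπ1 : ∑ a, π a = 1)
    (α δ : ℝ) (hα : 0 < α) (hδ : 0 < δ)
    {Ω : Type*} [MeasurableSpace Ω] (P : Measure Ω) [IsProbabilityMeasure P]
    (m : A → ℕ) (Y : (a : A) → Fin (m a) → Ω → S)
    (phat : Ω → A → S → ℝ)
    (hmeas : ∀ a i, Measurable (Y a i))
    (hindep : ∀ a, α / (Fintype.card A * Fintype.card S) ≤ π a →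
      iIndepFun (Y a) P)
    (hlaw : ∀ a, α / (Fintype.card A * Fintype.card S) ≤ π a →
      ∀ i s', P {ω | Y a i ω = s'} = ENNReal.ofReal (p a s'))
    (hm : ∀ a, α / (Fintype.card A * Fintype.card S) ≤ π a →
      (Fintype.card S : ℝ) ^ 2 / α ^ 2 *
          Real.log (2 * Fintype.card A * Fintype.card S / δ) ≤ (m a : ℝ))
    (hphat : ∀ ω a, α / (Fintype.card A * Fintype.card S) ≤ π a → ∀ s',
      phat ω a s' =
        ((Finset.univ.filter fun i => Y a i ω = s').card : ℝ) / (m a : ℝ))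
    (hphatdist : ∀ ω a, (∀ s', 0 ≤ phat ω a s') ∧ ∑ s', phat ω a s' = 1) :
    ENNReal.ofReal (1 - δ) ≤
      P {ω | tvDist (fun s' => ∑ a, π a * p a s')
              (fun s' => ∑ a, π a * phat ω a s') ≤ α} := by
  classical
  have hAne : Nonempty A := by
    by_contra h
    rw [not_nonempty_iff] at h
    rw [Finset.univ_eq_empty, Finset.sum_empty] at hπ1
    norm_num at hπ1
  have hSne : Nonempty S := by
    by_contra h
    rw [not_nonempty_iff] at h
    obtain ⟨a⟩ := hAne
    have := hp1 a
    rw [Finset.univ_eq_empty, Finset.sum_empty] at this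
    norm_num at this
  have hA1 : 1 ≤ Fintype.card A := Fintype.card_pos
  have hS1 : 1 ≤ Fintype.card S := Fintype.card_pos
  rcases le_or_gt 1 δ with hδ1 | hδ1
  · rw [ENNReal.ofReal_eq_zero.2 (by linarith)]
    exact zero_le
  have hple : ∀ a s', p a s' ≤ 1 := by
    intro a s'
    rw [← hp1 a]
    exact Finset.single_le_sum (fun i _ => hp0 a i) (Finset.mem_univ s')
  set η := α / (Fintype.card A * Fintype.card S : ℝ) with hηdef
  rcases eq_or_lt_of_le hS1 with hS1' | hS2
  · have huniv1 : (Finset.univ : Finset S).card = 1 := by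
      rw [Finset.card_univ]; exact hS1'.symm
    obtain ⟨b, hb⟩ := Finset.card_eq_one.mp huniv1
    have hsum1 : ∀ f : S → ℝ, ∑ s', f s' = f b := by
      intro f; rw [hb, Finset.sum_singleton]
    have hev : {ω | tvDist (fun s' => ∑ a, π a * p a s')
        (fun s' => ∑ a, π a * phat ω a s') ≤ α} = Set.univ := by
      ext ω
      simp only [Set.mem_setOf_eq, Set.mem_univ, iff_true]
      have hz : tvDist (fun s' => ∑ a, π a * p a s')
          (fun s' => ∑ a, π a * phat ω a s') = 0 := by
        rw [tvDist, hsum1]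
        have h1 : ∀ a, p a b = 1 := fun a => by rw [← hp1 a, hsum1]
        have h2 : ∀ a, phat ω a b = 1 := fun a => by
          rw [← (hphatdist ω a).2, hsum1]
        simp only [h1, h2]
        simp
      rw [hz]; exact hα.le
    rw [hev]
    simp only [measure_univ]
    exact ENNReal.ofReal_le_one.2 (by linarith)
  -- main case : |S| ≥ 2
  have hcApos : (0:ℝ) < Fintype.card A := by exact_mod_cast hA1
  have hcSpos : (0:ℝ) < Fintype.card S := by exact_mod_cast hS1
  have hcS2 : (2:ℝ) ≤ Fintype.card S := by exact_mod_cast hS2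
  set ε := α / (Fintype.card S : ℝ) with hεdef
  have hεpos : 0 < ε := by positivity
  have hηpos : 0 < η := by rw [hηdef]; positivity
  set L := Real.log (2 * Fintype.card A * Fintype.card S / δ) with hLdef
  have hcA1 : (1:ℝ) ≤ Fintype.card A := by exact_mod_cast hA1
  have hLpos : 0 < L := by
    apply Real.log_pos
    rw [lt_div_iff₀ hδ]
    nlinarith [hcA1, hcS2, hδ1]
  -- per-pair bound
  have hbig : ∀ a, η ≤ π a → ∀ s',
      P {ω | ε < |phat ω a s' - p a s'|}
        ≤ ENNReal.ofReal (δ / (Fintype.card A * Fintype.card S)) := by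
    intro a ha s'
    have hmlb := hm a ha
    have hm1 : 0 < m a := by
      rcases Nat.eq_zero_or_pos (m a) with h | h
      · exfalso
        rw [h] at hmlb
        have : (0:ℝ) < (Fintype.card S : ℝ)^2 / α^2 * L := by positivity
        simp at hmlb
        nlinarith
      · exact h
    have hset : {ω | ε < |phat ω a s' - p a s'|}
        = {ω | ε < |((Finset.univ.filter fun i => Y a i ω = s').card : ℝ)
              / (m a : ℝ) - p a s'|} := by
      ext ω; rw [Set.mem_setOf_eq, Set.mem_setOf_eq, hphat ω a ha s']
    rw [hset]
    refine (freq_dev_bound P (Y a) (hmeas a) (hindep a ha) s' (hp0 a s') (hple a s')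
      (fun i => hlaw a ha i s') hεpos hm1).trans (ENNReal.ofReal_le_ofReal ?_)
    -- real inequality : 2 exp(-2 m ε²) ≤ δ/(cA cS)
    have hmeps : L ≤ (m a : ℝ) * ε^2 := by
      have hkey : ((Fintype.card S : ℝ)^2 / α^2 * L) * ε^2 = L := by
        rw [hεdef, div_pow]
        field_simp
      calc L = ((Fintype.card S : ℝ)^2 / α^2 * L) * ε^2 := hkey.symm
        _ ≤ (m a : ℝ) * ε^2 := by
            apply mul_le_mul_of_nonneg_right hmlb (sq_nonneg ε)
    have hexp : Real.exp (-2 * (m a : ℝ) * ε^2) ≤ Real.exp (-2 * L) :=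
      Real.exp_le_exp.2 (by nlinarith)
    have hratio : (0:ℝ) < 2 * Fintype.card A * Fintype.card S / δ := by positivity
    have hexpL : Real.exp L = 2 * Fintype.card A * Fintype.card S / δ := Real.exp_log hratio
    have hexp2L : Real.exp (-2 * L) = (δ / (2 * Fintype.card A * Fintype.card S))^2 := by
      rw [show (-2 : ℝ) * L = -(L + L) by ring, Real.exp_neg, Real.exp_add, hexpL]
      rw [div_pow]
      field_simp
    calc 2 * Real.exp (-2 * (m a : ℝ) * ε^2) ≤ 2 * Real.exp (-2 * L) := by linarith
      _ = 2 * (δ / (2 * Fintype.card A * Fintype.card S))^2 := by rw [hexp2L]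
      _ ≤ δ / (Fintype.card A * Fintype.card S) := by
          have h2 : δ ≤ 2 * (Fintype.card A : ℝ) * Fintype.card S := by
            nlinarith [hcA1, hcS2, hδ1]
          rw [div_pow, ← mul_div_assoc, div_le_div_iff₀ (by positivity) (by positivity)]
          nlinarith [mul_le_mul_of_nonneg_left h2
            (le_of_lt (mul_pos hδ (mul_pos hcApos hcSpos))), mul_pos hcApos hcSpos]
  -- bad events
  set bad : A × S → Set Ω := fun q =>
    if η ≤ π q.1 then {ω | ε < |phat ω q.1 q.2 - p q.1 q.2|} else ∅ with hbaddef
  have hcountmeas : ∀ (a : A) (s' : S),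
      Measurable (fun ω => ((Finset.univ.filter fun i => Y a i ω = s').card : ℝ)) := by
    intro a s'
    have heq : (fun ω => ((Finset.univ.filter fun i => Y a i ω = s').card : ℝ))
        = fun ω => ∑ i, if Y a i ω = s' then (1:ℝ) else 0 := by
      funext ω
      rw [Finset.card_filter]
      push_cast
      rfl
    rw [heq]
    apply Finset.measurable_sum
    intro i _
    exact Measurable.ite ((hmeas a i) (measurableSet_singleton s'))
      measurable_const measurable_const
  have hbadmeas : ∀ q, MeasurableSet (bad q) := by
    intro q
    by_cases h : η ≤ π q.1
    · simp only [hbaddef, if_pos h]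
      have hset : {ω | ε < |phat ω q.1 q.2 - p q.1 q.2|}
          = {ω | ε < |((Finset.univ.filter fun i => Y q.1 i ω = q.2).card : ℝ)
                / (m q.1 : ℝ) - p q.1 q.2|} := by
        ext ω; rw [Set.mem_setOf_eq, Set.mem_setOf_eq, hphat ω q.1 h q.2]
      rw [hset]
      exact measurableSet_lt measurable_const
        ((((hcountmeas q.1 q.2).div_const _).sub measurable_const).abs)
    · simp only [hbaddef, if_neg h]; exact MeasurableSet.empty
  have hbadP : ∀ q, P (bad q) ≤ ENNReal.ofReal (δ / (Fintype.card A * Fintype.card S)) := by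
    intro q
    by_cases h : η ≤ π q.1
    · simp only [hbaddef, if_pos h]; exact hbig q.1 h q.2
    · simp only [hbaddef, if_neg h]; simp
  have hPU : P (⋃ q, bad q) ≤ ENNReal.ofReal δ := by
    calc P (⋃ q, bad q) ≤ ∑ q, P (bad q) := measure_iUnion_fintype_le _ _
      _ ≤ ∑ _q : A × S, ENNReal.ofReal (δ / (Fintype.card A * Fintype.card S)) :=
          Finset.sum_le_sum fun q _ => hbadP q
      _ = (Fintype.card (A × S) : ℕ) •
            ENNReal.ofReal (δ / (Fintype.card A * Fintype.card S)) := by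
          rw [Finset.sum_const, Finset.card_univ]
      _ = ENNReal.ofReal δ := by
          rw [nsmul_eq_mul, Fintype.card_prod, ← ENNReal.ofReal_natCast,
            ← ENNReal.ofReal_mul (Nat.cast_nonneg _)]
          congr 1
          push_cast
          field_simp
  -- good set implies small tv distance
  have hG : (⋃ q, bad q)ᶜ ⊆ {ω | tvDist (fun s' => ∑ a, π a * p a s')
      (fun s' => ∑ a, π a * phat ω a s') ≤ α} := by
    intro ω hω
    simp only [Set.mem_compl_iff, Set.mem_iUnion, not_exists] at hω
    have hgood : ∀ a s', η ≤ π a → |p a s' - phat ω a s'| ≤ ε := by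
      intro a s' ha
      have h2 := hω (a, s')
      simp only [hbaddef, if_pos ha, Set.mem_setOf_eq, not_lt] at h2
      rw [abs_sub_comm]
      exact h2
    simp only [Set.mem_setOf_eq]
    rw [tvDist]
    have step1 : ∀ s' : S, |(∑ a, π a * p a s') - ∑ a, π a * phat ω a s'|
        ≤ ∑ a, π a * |p a s' - phat ω a s'| := by
      intro s'
      rw [← Finset.sum_sub_distrib]
      calc |∑ a, (π a * p a s' - π a * phat ω a s')|
          ≤ ∑ a, |π a * p a s' - π a * phat ω a s'| := Finset.abs_sum_le_sum_abs _ _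
        _ = ∑ a, π a * |p a s' - phat ω a s'| := by
            apply Finset.sum_congr rfl
            intro a _
            rw [← mul_sub, abs_mul, abs_of_nonneg (hπ0 a)]
    have step2 : ∑ s', |(∑ a, π a * p a s') - ∑ a, π a * phat ω a s'|
        ≤ ∑ a, π a * ∑ s', |p a s' - phat ω a s'| := by
      calc ∑ s', |(∑ a, π a * p a s') - ∑ a, π a * phat ω a s'|
          ≤ ∑ s', ∑ a, π a * |p a s' - phat ω a s'| :=
            Finset.sum_le_sum fun s' _ => step1 s'
        _ = ∑ a, ∑ s', π a * |p a s' - phat ω a s'| := Finset.sum_comm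
        _ = ∑ a, π a * ∑ s', |p a s' - phat ω a s'| := by
            apply Finset.sum_congr rfl
            intro a _
            rw [Finset.mul_sum]
    have hRnonneg : ∀ a, 0 ≤ ∑ s', |p a s' - phat ω a s'| :=
      fun a => Finset.sum_nonneg fun s' _ => abs_nonneg _
    have step3 : ∑ a, π a * ∑ s', |p a s' - phat ω a s'| ≤ α + α := by
      rw [← Finset.sum_filter_add_sum_filter_not Finset.univ (fun a => η ≤ π a)]
      have hbigsum : ∑ a ∈ Finset.univ.filter (fun a => η ≤ π a),
          π a * ∑ s', |p a s' - phat ω a s'| ≤ α := by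
        calc ∑ a ∈ Finset.univ.filter (fun a => η ≤ π a),
              π a * ∑ s', |p a s' - phat ω a s'|
            ≤ ∑ a ∈ Finset.univ.filter (fun a => η ≤ π a), π a * α := by
              apply Finset.sum_le_sum
              intro a ha'
              have ha := (Finset.mem_filter.mp ha').2
              apply mul_le_mul_of_nonneg_left _ (hπ0 a)
              calc ∑ s', |p a s' - phat ω a s'| ≤ ∑ _s' : S, ε :=
                    Finset.sum_le_sum fun s' _ => hgood a s' ha
                _ = (Fintype.card S : ℝ) * ε := by
                    rw [Finset.sum_const, Finset.card_univ, nsmul_eq_mul]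
                _ = α := by rw [hεdef]; field_simp
          _ = (∑ a ∈ Finset.univ.filter (fun a => η ≤ π a), π a) * α := by
              rw [Finset.sum_mul]
          _ ≤ 1 * α := by
              apply mul_le_mul_of_nonneg_right _ hα.le
              rw [← hπ1]
              exact Finset.sum_le_sum_of_subset_of_nonneg (Finset.filter_subset _ _)
                (fun i _ _ => hπ0 i)
          _ = α := one_mul α
      have hsmallsum : ∑ a ∈ Finset.univ.filter (fun a => ¬ η ≤ π a),
          π a * ∑ s', |p a s' - phat ω a s'| ≤ α := by
        have hterm : ∀ a ∈ Finset.univ.filter (fun a => ¬ η ≤ π a),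
            π a * ∑ s', |p a s' - phat ω a s'| ≤ η * 2 := by
          intro a ha'
          have ha := (Finset.mem_filter.mp ha').2
          push_neg at ha
          have hR2 : ∑ s', |p a s' - phat ω a s'| ≤ 2 := by
            calc ∑ s', |p a s' - phat ω a s'|
                ≤ ∑ s', (p a s' + phat ω a s') := by
                  apply Finset.sum_le_sum
                  intro s' _
                  calc |p a s' - phat ω a s'| ≤ |p a s'| + |phat ω a s'| := abs_sub _ _
                    _ = p a s' + phat ω a s' := by
                        rw [abs_of_nonneg (hp0 a s'), abs_of_nonneg ((hphatdist ω a).1 s')]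
              _ = 2 := by rw [Finset.sum_add_distrib, hp1 a, (hphatdist ω a).2]; norm_num
          exact mul_le_mul ha.le hR2 (hRnonneg a) hηpos.le
        calc ∑ a ∈ Finset.univ.filter (fun a => ¬ η ≤ π a),
              π a * ∑ s', |p a s' - phat ω a s'|
            ≤ ∑ _a ∈ Finset.univ.filter (fun a => ¬ η ≤ π a), η * 2 :=
              Finset.sum_le_sum hterm
          _ = ((Finset.univ.filter (fun a => ¬ η ≤ π a)).card : ℝ) * (η * 2) := by
              rw [Finset.sum_const, nsmul_eq_mul]
          _ ≤ (Fintype.card A : ℝ) * (η * 2) := by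
              apply mul_le_mul_of_nonneg_right _ (by positivity)
              exact_mod_cast (Finset.card_filter_le _ _).trans_eq (Finset.card_univ)
          _ = 2 * ((Fintype.card A : ℝ) * η) := by ring
          _ = 2 * ε := by
              rw [hηdef, hεdef]
              field_simp
          _ ≤ α := by
              rw [hεdef, ← mul_div_assoc, div_le_iff₀ hcSpos]
              nlinarith [hα, hcS2]
      linarith
    calc (1:ℝ)/2 * ∑ s', |(∑ a, π a * p a s') - ∑ a, π a * phat ω a s'|
        ≤ 1/2 * (α + α) := by
          apply mul_le_mul_of_nonneg_left (step2.trans step3) (by norm_num)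
      _ = α := by ring
  -- conclude
  have hUmeas : MeasurableSet (⋃ q, bad q) := MeasurableSet.iUnion hbadmeas
  calc ENNReal.ofReal (1 - δ) ≤ 1 - ENNReal.ofReal δ := by
        rw [ENNReal.ofReal_sub _ hδ.le, ENNReal.ofReal_one]
    _ ≤ 1 - P (⋃ q, bad q) := tsub_le_tsub_left hPU 1
    _ = P (⋃ q, bad q)ᶜ := (prob_compl_eq_one_sub hUmeas).symm
    _ ≤ P {ω | tvDist (fun s' => ∑ a, π a * p a s')
          (fun s' => ∑ a, π a * phat ω a s') ≤ α} := measure_mono hG
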